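/- Let $G = (V, E)$ be a connected graph with maximum degree $\Delta$. Then the dissociation number satisfies $\tau(G) \ge 2 \left\lceil \sum_{e = \{u,v\} \in E} \frac{1}{(d(u) + d(v))\Delta - 1} \right\rceil$. -/
import Mathlib


open SimpleGraph Finset

/-- `F` is contained in `G` as a subgraph (an injective adjacency-preserving map). -/
def containsCopy {α β : Type*} (F : SimpleGraph α) (G : SimpleGraph β) : Prop :=
  ∃ f : α ↪ β, ∀ a b, F.Adj a b → G.Adj (f a) (f b)

/-- For even `d` this is the cocktail party graph `CP_d` (complete graph minus the
perfect matching pairing `2j, 2j+1`); for odd `d` it is the odd cocktail party graph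
`L_d = CP_{d-1} ∨ K_1`. -/
def cocktail (d : ℕ) : SimpleGraph (Fin d) :=
  SimpleGraph.fromRel (fun i j => (i : ℕ) / 2 ≠ (j : ℕ) / 2)

/-- `S` is a dissociation set of `G`: every vertex of `S` has at most one neighbor in `S`. -/
def IsDissocSet {V : Type*} (G : SimpleGraph V) (S : Finset V) : Prop :=
  ∀ v ∈ S, ({u | u ∈ S ∧ G.Adj v u}).ncard ≤ 1

/-- The dissociation number of `G`. -/
noncomputable def dissocNum {V : Type*} [Fintype V] (G : SimpleGraph V) : ℕ :=
  sSup {k | ∃ S : Finset V, IsDissocSet G S ∧ S.card = k}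

section Aux

variable {V : Type*} [Fintype V] (G : SimpleGraph V) [DecidableRel G.Adj]

/-- The weight of an edge. -/
noncomputable def wt : Sym2 V → ℝ :=
  Sym2.lift ⟨fun u v => (1 : ℝ) /
      (((G.degree u : ℝ) + (G.degree v : ℝ)) * (G.maxDegree : ℝ) - 1),
    fun u v => by dsimp only; rw [add_comm (G.degree u : ℝ)]⟩

/-- The degree sum of an edge. -/
def Dd : Sym2 V → ℕ :=
  Sym2.lift ⟨fun u v => G.degree u + G.degree v, fun u v => add_comm _ _⟩

lemma wt_eq (f : Sym2 V) :
    wt G f = 1 / ((Dd G f : ℝ) * (G.maxDegree : ℝ) - 1) := by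
  induction f using Sym2.ind with
  | _ u v =>
    simp only [wt, Dd, Sym2.lift_mk]
    push_cast
    ring_nf

lemma key : ∀ (n : ℕ) (E' : Finset (Sym2 V)), E'.card ≤ n → E' ⊆ G.edgeFinset →
    ∃ (S : Finset V) (k : ℕ), IsDissocSet G S ∧ S.card = 2 * k ∧
      (∀ s ∈ S, ∃ f ∈ E', s ∈ f) ∧ ∑ f ∈ E', wt G f ≤ (k : ℝ) := by
  classical
  intro n
  induction n with
  | zero =>
    intro E' hcard _
    have hE : E' = ∅ := Finset.card_eq_zero.mp (Nat.le_zero.mp hcard)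
    subst hE
    exact ⟨∅, 0, fun v hv => by simp at hv, by simp, by simp, by simp⟩
  | succ n ih =>
    intro E' hcard hE'
    rcases E'.eq_empty_or_nonempty with rfl | hne
    · exact ⟨∅, 0, fun v hv => by simp at hv, by simp, by simp, by simp⟩
    obtain ⟨e, he, hemin⟩ := E'.exists_min_image (Dd G) hne
    obtain ⟨u, v, rfl⟩ : ∃ u v, e = s(u, v) := by
      obtain ⟨⟨u, v⟩, h⟩ := Quot.exists_rep e
      exact ⟨u, v, h.symm⟩
    have hadj : G.Adj u v := by simpa using hE' he
    have hΔ1 : 1 ≤ G.maxDegree := by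
      have h1 : 0 < G.degree u := G.degree_pos_iff_exists_adj u |>.mpr ⟨v, hadj⟩
      exact le_trans h1 (G.degree_le_maxDegree u)
    have hDge : ∀ f ∈ E', 2 ≤ Dd G f := by
      intro f
      induction f using Sym2.ind with
      | _ a b =>
        intro hf
        have hab : G.Adj a b := by simpa using hE' hf
        have ha : 0 < G.degree a := G.degree_pos_iff_exists_adj a |>.mpr ⟨b, hab⟩
        have hb : 0 < G.degree b := G.degree_pos_iff_exists_adj b |>.mpr ⟨a, hab.symm⟩
        simp only [Dd, Sym2.lift_mk]
        omega
    have hden : ∀ f ∈ E', (1 : ℝ) ≤ (Dd G f : ℝ) * (G.maxDegree : ℝ) - 1 := by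
      intro f hf
      have h2 : 2 * 1 ≤ Dd G f * G.maxDegree := Nat.mul_le_mul (hDge f hf) hΔ1
      have h3 : (2 : ℝ) ≤ (Dd G f : ℝ) * (G.maxDegree : ℝ) := by
        exact_mod_cast (by omega : 2 ≤ Dd G f * G.maxDegree)
      linarith
    have hwt_nonneg : ∀ f ∈ E', 0 ≤ wt G f := by
      intro f hf
      rw [wt_eq]
      exact div_nonneg zero_le_one (le_trans zero_le_one (hden f hf))
    have hwt_le : ∀ f ∈ E', wt G f ≤ wt G s(u, v) := by
      intro f hf
      rw [wt_eq, wt_eq]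
      apply one_div_le_one_div_of_le
      · linarith [hden _ he]
      · have h1 : (Dd G s(u, v) : ℝ) ≤ (Dd G f : ℝ) := by exact_mod_cast hemin f hf
        have h2 : (0 : ℝ) ≤ (G.maxDegree : ℝ) := by positivity
        nlinarith
    set W : Finset V := G.neighborFinset u ∪ G.neighborFinset v with hW
    set R : Finset (Sym2 V) := E'.filter (fun f => ∃ x ∈ f, x ∈ W) with hR
    have huW : u ∈ W := Finset.mem_union_right _
      (by rw [SimpleGraph.mem_neighborFinset]; exact hadj.symm)
    have hvW : v ∈ W := Finset.mem_union_left _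
      (by rw [SimpleGraph.mem_neighborFinset]; exact hadj)
    have heR : s(u, v) ∈ R := Finset.mem_filter.mpr ⟨he, u, by simp, huW⟩
    have hRsub : R ⊆ E' := Finset.filter_subset _ _
    -- double counting
    have hcount : R.card + 1 ≤ (G.degree u + G.degree v) * G.maxDegree := by
      have h1 : ∀ f ∈ R, 1 ≤ (W.filter (fun x => x ∈ f)).card := by
        intro f hf
        obtain ⟨-, x, hxf, hxW⟩ := Finset.mem_filter.mp hf
        exact Finset.card_pos.mpr ⟨x, Finset.mem_filter.mpr ⟨hxW, hxf⟩⟩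
      have h2 : 2 ≤ (W.filter (fun x => x ∈ s(u, v))).card := by
        have hsub : ({u, v} : Finset V) ⊆ W.filter (fun x => x ∈ s(u, v)) := by
          intro x hx
          rcases Finset.mem_insert.mp hx with rfl | hx
          · exact Finset.mem_filter.mpr ⟨huW, by simp⟩
          · rw [Finset.mem_singleton] at hx; subst hx
            exact Finset.mem_filter.mpr ⟨hvW, by simp⟩
        calc 2 = ({u, v} : Finset V).card := (Finset.card_pair hadj.ne).symm
          _ ≤ _ := Finset.card_le_card hsub
      have hsum1 : R.card + 1 ≤ ∑ f ∈ R, (W.filter (fun x => x ∈ f)).card := by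
        have herase : R.card + 1 = (R.erase s(u, v)).card + 2 := by
          rw [Finset.card_erase_of_mem heR]
          have := Finset.card_pos.mpr ⟨_, heR⟩
          omega
        have hge : (R.erase s(u, v)).card
            ≤ ∑ f ∈ R.erase s(u, v), (W.filter (fun x => x ∈ f)).card := by
          calc (R.erase s(u, v)).card = ∑ _f ∈ R.erase s(u, v), 1 := by simp
            _ ≤ _ := Finset.sum_le_sum (fun f hf => h1 f (Finset.mem_of_mem_erase hf))
        rw [herase, ← Finset.sum_erase_add R _ heR]
        omega
      have hswap : ∑ f ∈ R, (W.filter (fun x => x ∈ f)).card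
          = ∑ x ∈ W, (R.filter (fun f => x ∈ f)).card := by
        simp only [Finset.card_filter]
        exact Finset.sum_comm
      have hdeg : ∀ x ∈ W, (R.filter (fun f => x ∈ f)).card ≤ G.maxDegree := by
        intro x _
        have hsub : R.filter (fun f => x ∈ f) ⊆ G.incidenceFinset x := by
          intro f hf
          obtain ⟨hfR, hxf⟩ := Finset.mem_filter.mp hf
          rw [SimpleGraph.mem_incidenceFinset]
          exact ⟨SimpleGraph.mem_edgeFinset.mp (hE' (hRsub hfR)), hxf⟩
        calc (R.filter (fun f => x ∈ f)).card ≤ (G.incidenceFinset x).card :=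
              Finset.card_le_card hsub
          _ = G.degree x := G.card_incidenceFinset_eq_degree x
          _ ≤ G.maxDegree := G.degree_le_maxDegree x
      have hWcard : W.card ≤ G.degree u + G.degree v := by
        calc W.card ≤ (G.neighborFinset u).card + (G.neighborFinset v).card :=
              Finset.card_union_le _ _
          _ = G.degree u + G.degree v := rfl
      calc R.card + 1 ≤ ∑ f ∈ R, (W.filter (fun x => x ∈ f)).card := hsum1
        _ = ∑ x ∈ W, (R.filter (fun f => x ∈ f)).card := hswap
        _ ≤ ∑ _x ∈ W, G.maxDegree := Finset.sum_le_sum hdeg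
        _ = W.card * G.maxDegree := by rw [Finset.sum_const, smul_eq_mul]
        _ ≤ (G.degree u + G.degree v) * G.maxDegree := Nat.mul_le_mul_right _ hWcard
    have hRsum : ∑ f ∈ R, wt G f ≤ 1 := by
      have h1 : ∑ f ∈ R, wt G f ≤ R.card • wt G s(u, v) :=
        Finset.sum_le_card_nsmul R _ _ (fun f hf => hwt_le f (hRsub hf))
      rw [nsmul_eq_mul] at h1
      have hde : (1 : ℝ) ≤ (Dd G s(u, v) : ℝ) * (G.maxDegree : ℝ) - 1 := hden _ he
      have hDd : Dd G s(u, v) = G.degree u + G.degree v := by simp [Dd]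
      have hcard' : (R.card : ℝ) ≤ (Dd G s(u, v) : ℝ) * (G.maxDegree : ℝ) - 1 := by
        have h3 : ((R.card + 1 : ℕ) : ℝ)
            ≤ (((G.degree u + G.degree v) * G.maxDegree : ℕ) : ℝ) := by
          exact_mod_cast hcount
        rw [hDd]
        push_cast at h3 ⊢
        linarith
      have hwpos : 0 ≤ wt G s(u, v) := hwt_nonneg _ he
      calc ∑ f ∈ R, wt G f ≤ (R.card : ℝ) * wt G s(u, v) := h1
        _ ≤ ((Dd G s(u, v) : ℝ) * (G.maxDegree : ℝ) - 1) * wt G s(u, v) :=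
            mul_le_mul_of_nonneg_right hcard' hwpos
        _ = 1 := by
            rw [wt_eq, mul_one_div, div_self (by linarith : ((Dd G s(u, v) : ℝ) * (G.maxDegree : ℝ) - 1) ≠ 0)]
    -- recurse on E' \ R
    set E'' : Finset (Sym2 V) := E' \ R with hE''
    have hlt : E''.card < E'.card :=
      Finset.card_lt_card (Finset.sdiff_ssubset hRsub ⟨_, heR⟩)
    obtain ⟨S'', k'', hdis'', hScard'', hSend'', hsum''⟩ :=
      ih E'' (by omega) (fun f hf => hE' (Finset.mem_sdiff.mp hf).1)
    have hS''W : ∀ s ∈ S'', s ∉ W := by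
      intro s hs hsW
      obtain ⟨f, hf, hsf⟩ := hSend'' s hs
      obtain ⟨hfE', hfR⟩ := Finset.mem_sdiff.mp hf
      exact hfR (Finset.mem_filter.mpr ⟨hfE', s, hsf, hsW⟩)
    have hSu : u ∉ S'' := fun h => hS''W u h huW
    have hSv : v ∉ S'' := fun h => hS''W v h hvW
    have hSadj : ∀ s ∈ S'', ¬ G.Adj u s ∧ ¬ G.Adj v s := by
      intro s hs
      constructor
      · intro h
        exact hS''W s hs (Finset.mem_union_left _ (SimpleGraph.mem_neighborFinset G u s |>.mpr h))
      · intro h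
        exact hS''W s hs (Finset.mem_union_right _ (SimpleGraph.mem_neighborFinset G v s |>.mpr h))
    refine ⟨insert u (insert v S''), k'' + 1, ?_, ?_, ?_, ?_⟩
    · -- dissociation set
      intro x hx
      rcases Finset.mem_insert.mp hx with hxu | hx
      · have hset : {y | y ∈ insert u (insert v S'') ∧ G.Adj u y} = {v} := by
          ext y
          simp only [Set.mem_setOf_eq, Finset.mem_insert, Set.mem_singleton_iff]
          constructor
          · rintro ⟨hy, hadjy⟩
            rcases hy with hyu | hyv | hyS
            · rw [hyu] at hadjy; exact absurd hadjy G.irrefl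
            · exact hyv
            · exact absurd hadjy (hSadj y hyS).1
          · rintro rfl
            exact ⟨Or.inr (Or.inl rfl), hadj⟩
        rw [hxu, hset, Set.ncard_singleton]
      rcases Finset.mem_insert.mp hx with hxv | hx
      · have hset : {y | y ∈ insert u (insert v S'') ∧ G.Adj v y} = {u} := by
          ext y
          simp only [Set.mem_setOf_eq, Finset.mem_insert, Set.mem_singleton_iff]
          constructor
          · rintro ⟨hy, hadjy⟩
            rcases hy with hyu | hyv | hyS
            · exact hyu
            · rw [hyv] at hadjy; exact absurd hadjy G.irrefl
            · exact absurd hadjy (hSadj y hyS).2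
          · rintro rfl
            exact ⟨Or.inl rfl, hadj.symm⟩
        rw [hxv, hset, Set.ncard_singleton]
      · have hset : {y | y ∈ insert u (insert v S'') ∧ G.Adj x y}
            = {y | y ∈ S'' ∧ G.Adj x y} := by
          ext y
          simp only [Set.mem_setOf_eq, Finset.mem_insert]
          constructor
          · rintro ⟨hy, hadjy⟩
            rcases hy with hyu | hyv | hyS
            · rw [hyu] at hadjy; exact absurd hadjy.symm (hSadj x hx).1
            · rw [hyv] at hadjy; exact absurd hadjy.symm (hSadj x hx).2
            · exact ⟨hyS, hadjy⟩
          · rintro ⟨hy, hadjy⟩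
            exact ⟨Or.inr (Or.inr hy), hadjy⟩
        rw [hset]
        exact hdis'' x hx
    · -- cardinality
      have h1 : u ∉ insert v S'' := by
        simp only [Finset.mem_insert]
        push_neg
        exact ⟨hadj.ne, hSu⟩
      rw [Finset.card_insert_of_notMem h1, Finset.card_insert_of_notMem hSv, hScard'']
      ring
    · -- endpoints
      intro s hs
      rcases Finset.mem_insert.mp hs with hsu | hs
      · exact ⟨s(u, v), he, by rw [hsu]; simp⟩
      rcases Finset.mem_insert.mp hs with hsv | hs
      · exact ⟨s(u, v), he, by rw [hsv]; simp⟩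
      · obtain ⟨f, hf, hsf⟩ := hSend'' s hs
        exact ⟨f, (Finset.mem_sdiff.mp hf).1, hsf⟩
    · -- weight bound
      have hsplit : ∑ f ∈ E'', wt G f + ∑ f ∈ R, wt G f = ∑ f ∈ E', wt G f :=
        Finset.sum_sdiff hRsub
      push_cast
      linarith

end Aux

theorem stmt19 {V : Type*} [Fintype V] (G : SimpleGraph V) [DecidableRel G.Adj]
    (hc : G.Connected) :
    2 * ⌈∑ e ∈ G.edgeFinset,
        Sym2.lift ⟨fun u v => (1 : ℝ) /
            (((G.degree u : ℝ) + (G.degree v : ℝ)) * (G.maxDegree : ℝ) - 1),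
          fun u v => by dsimp only; rw [add_comm (G.degree u : ℝ)]⟩ e⌉₊ ≤ dissocNum G := by
  obtain ⟨S, k, hdis, hcardS, -, hsum⟩ :=
    key G G.edgeFinset.card G.edgeFinset le_rfl subset_rfl
  have h1 : ⌈∑ e ∈ G.edgeFinset, wt G e⌉₊ ≤ k := Nat.ceil_le.mpr hsum
  have h2 : S.card ≤ dissocNum G := by
    apply le_csSup
    · refine ⟨Fintype.card V, ?_⟩
      rintro m ⟨T, -, rfl⟩
      exact le_trans (Finset.card_le_univ T) (le_of_eq Finset.card_univ)
    · exact ⟨S, hdis, rfl⟩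
  calc 2 * ⌈∑ e ∈ G.edgeFinset,
        Sym2.lift ⟨fun u v => (1 : ℝ) /
            (((G.degree u : ℝ) + (G.degree v : ℝ)) * (G.maxDegree : ℝ) - 1),
          fun u v => by dsimp only; rw [add_comm (G.degree u : ℝ)]⟩ e⌉₊
      = 2 * ⌈∑ e ∈ G.edgeFinset, wt G e⌉₊ := rfl
    _ ≤ 2 * k := by omega
    _ = S.card := hcardS.symm
    _ ≤ dissocNum G := h2
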